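/- Let G be an n-vertex triangle-free graph with e(G) ≥ (n−4)²/4, and let S = {v ∈ V(G) : d_G(v) ≤ (2/5)n}. Then |S| ≤ 20 for n sufficiently large. -/

import Mathlib

open Finset SimpleGraph

/-- Mantel's theorem, real version: a triangle-free graph on `n` vertices has
at most `n^2/4` edges. -/
lemma mantel_real (V : Type) [Fintype V] [DecidableEq V] (G : SimpleGraph V)
    [DecidableRel G.Adj] (hG : G.CliqueFree 3) :
    (G.edgeFinset.card : ℝ) ≤ (Fintype.card V : ℝ) ^ 2 / 4 := by
  classical
  set n := Fintype.card V with hn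
  -- adjacent vertices have disjoint neighborhoods
  have hdeg : ∀ u v : V, G.Adj u v → G.degree u + G.degree v ≤ n := by
    intro u v huv
    have hdisj : Disjoint (G.neighborFinset u) (G.neighborFinset v) := by
      rw [Finset.disjoint_left]
      intro w hwu hwv
      rw [mem_neighborFinset] at hwu hwv
      exact hG {u, v, w} (is3Clique_triple_iff.mpr ⟨huv, hwu, hwv⟩)
    calc G.degree u + G.degree v
        = (G.neighborFinset u ∪ G.neighborFinset v).card := by
          rw [Finset.card_union_of_disjoint hdisj, card_neighborFinset_eq_degree,
            card_neighborFinset_eq_degree]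
      _ ≤ Finset.univ.card := Finset.card_le_card (Finset.subset_univ _)
      _ = n := Finset.card_univ
  set P : Finset (V × V) := Finset.univ.filter (fun p => G.Adj p.1 p.2) with hP
  have hsum1 : ∀ f : V → ℕ, ∑ p ∈ P, f p.1 = ∑ v : V, G.degree v * f v := by
    intro f
    rw [hP, Finset.sum_filter, Fintype.sum_prod_type]
    refine Finset.sum_congr rfl fun u _ => ?_
    rw [← Finset.sum_filter]
    have h2 : Finset.univ.filter (fun v => G.Adj u v) = G.neighborFinset u := by
      ext w; simp [mem_neighborFinset]
    rw [h2]
    calc ∑ a ∈ G.neighborFinset u, f (u, a).1 = ∑ _a ∈ G.neighborFinset u, f u :=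
          Finset.sum_congr rfl (fun a _ => rfl)
      _ = G.degree u * f u := by
          rw [Finset.sum_const, smul_eq_mul, card_neighborFinset_eq_degree]
  have hswap : ∑ p ∈ P, G.degree p.2 = ∑ p ∈ P, G.degree p.1 := by
    apply Finset.sum_nbij' (fun p => (p.2, p.1)) (fun p => (p.2, p.1)) <;>
      simp +contextual [hP, adj_comm]
  have hcard1 : P.card = ∑ v : V, G.degree v := by
    simpa using hsum1 (fun _ => 1)
  have hcard : P.card = 2 * G.edgeFinset.card := by
    rw [hcard1, G.sum_degrees_eq_twice_card_edges]
  have hsd : ∑ v : V, G.degree v ^ 2 ≤ G.edgeFinset.card * n := by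
    have h1 : ∑ p ∈ P, (G.degree p.1 + G.degree p.2) ≤ P.card * n := by
      apply Finset.sum_le_card_nsmul
      intro p hp
      rw [hP, Finset.mem_filter] at hp
      exact hdeg _ _ hp.2
    rw [Finset.sum_add_distrib, hswap, hsum1 (fun v => G.degree v), hcard] at h1
    have hsq : ∑ v : V, G.degree v * G.degree v = ∑ v : V, G.degree v ^ 2 :=
      Finset.sum_congr rfl (fun v _ => (sq _).symm)
    rw [hsq] at h1
    have h2 : 2 * G.edgeFinset.card * n = 2 * (G.edgeFinset.card * n) := by ring
    omega
  have hcheb : (∑ v : V, G.degree v) ^ 2 ≤ n * ∑ v : V, G.degree v ^ 2 := by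
    simpa [hn, Finset.card_univ] using
      (sq_sum_le_card_mul_sum_sq (s := (Finset.univ : Finset V))
        (f := fun v => G.degree v))
  rw [G.sum_degrees_eq_twice_card_edges] at hcheb
  set e := G.edgeFinset.card with he
  rcases Nat.eq_zero_or_pos e with h0 | h0
  · rw [h0]; push_cast; positivity
  · have h4 : e * (4 * e) ≤ e * (n * n) := by
      calc e * (4 * e) = (2 * e) ^ 2 := by ring
        _ ≤ n * ∑ v : V, G.degree v ^ 2 := hcheb
        _ ≤ n * (e * n) := Nat.mul_le_mul_left _ hsd
        _ = e * (n * n) := by ring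
    have h5 : 4 * e ≤ n * n := Nat.le_of_mul_le_mul_left h4 h0
    have h6 : (4 * e : ℝ) ≤ (n : ℝ) * (n : ℝ) := by exact_mod_cast h5
    nlinarith

/-- Deleting the vertices of `S'` removes at most `∑_{v ∈ S'} deg v` edges. -/
lemma edge_delete_bound (V : Type) [Fintype V] [DecidableEq V] (G : SimpleGraph V)
    [DecidableRel G.Adj] (S' : Finset V) :
    G.edgeFinset.card ≤
      (G.comap (Function.Embedding.subtype (fun v => v ∉ S'))).edgeFinset.card
        + ∑ v ∈ S', G.degree v := by
  set A := G.edgeFinset.filter (fun e => ∀ x ∈ e, x ∉ S') with hA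
  set B := G.edgeFinset.filter (fun e => ¬ ∀ x ∈ e, x ∉ S') with hB
  have hsplit : A.card + B.card = G.edgeFinset.card :=
    Finset.card_filter_add_card_filter_not _
  have hBle : B.card ≤ ∑ v ∈ S', G.degree v := by
    have hsub : B ⊆ S'.biUnion (fun v => G.incidenceFinset v) := by
      intro e he
      rw [hB, Finset.mem_filter] at he
      obtain ⟨he1, he2⟩ := he
      push_neg at he2
      obtain ⟨x, hxe, hxS⟩ := he2
      rw [Finset.mem_biUnion]
      exact ⟨x, hxS, by
        rw [mem_incidenceFinset]
        exact ⟨mem_edgeFinset.mp he1, hxe⟩⟩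
    calc B.card ≤ ∑ v ∈ S', (G.incidenceFinset v).card :=
          le_trans (Finset.card_le_card hsub) (Finset.card_biUnion_le)
      _ = ∑ v ∈ S', G.degree v :=
          Finset.sum_congr rfl fun v _ => G.card_incidenceFinset_eq_degree v
  have hAle : A.card ≤
      (G.comap (Function.Embedding.subtype (fun v => v ∉ S'))).edgeFinset.card := by
    have hsub : A ⊆ (G.comap (Function.Embedding.subtype (fun v => v ∉ S'))).edgeFinset.image
        (Sym2.map (Function.Embedding.subtype _)) := by
      intro e he
      rw [hA, Finset.mem_filter] at he
      obtain ⟨he1, he2⟩ := he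
      induction e with
      | _ a b =>
        have hadj : G.Adj a b := mem_edgeFinset.mp he1
        have ha : a ∉ S' := he2 a (Sym2.mem_mk_left a b)
        have hb : b ∉ S' := he2 b (Sym2.mem_mk_right a b)
        rw [Finset.mem_image]
        refine ⟨s(⟨a, ha⟩, ⟨b, hb⟩), ?_, rfl⟩
        rw [mem_edgeFinset]
        exact hadj
    exact le_trans (Finset.card_le_card hsub) (Finset.card_image_le)
  omega

/-- For sufficiently large `n`, an `n`-vertex triangle-free graph with at least
`(n−4)²/4` edges has at most 20 vertices of degree at most `2n/5`. -/
theorem stmt9 :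
    ∃ N : ℕ, ∀ (V : Type) [Fintype V] [DecidableEq V] (G : SimpleGraph V)
      [DecidableRel G.Adj],
      N ≤ Fintype.card V → G.CliqueFree 3 →
      ((Fintype.card V : ℝ) - 4) ^ 2 / 4 ≤ (G.edgeFinset.card : ℝ) →
      (Finset.univ.filter fun v =>
          (G.degree v : ℝ) ≤ 2 / 5 * (Fintype.card V : ℝ)).card ≤ 20 := by
  use 2000
  intro V _ _ G _ hN hG hE
  by_contra hcon
  push_neg at hcon
  set n := Fintype.card V with hn
  obtain ⟨S', hS'sub, hS'card⟩ := Finset.exists_subset_card_eq hcon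
  have hS'card' : S'.card = 21 := hS'card
  have hG'free : (G.comap (Function.Embedding.subtype (fun v => v ∉ S'))).CliqueFree 3 :=
    hG.comap ⟨(SimpleGraph.Embedding.comap (Function.Embedding.subtype _) G).toCopy⟩
  have hm : Fintype.card {v // v ∉ S'} = n - 21 := by
    rw [Fintype.card_subtype_compl, Fintype.card_coe, hS'card']
  have hmantel := mantel_real _ _ hG'free
  rw [hm] at hmantel
  have h21n : 21 ≤ n := by omega
  have hmcast : ((n - 21 : ℕ) : ℝ) = (n : ℝ) - 21 := by
    push_cast [h21n]; ring
  rw [hmcast] at hmantel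
  have hdel := edge_delete_bound V G S'
  have hdegsum : ∑ v ∈ S', (G.degree v : ℝ) ≤ 21 * (2 / 5 * (n : ℝ)) := by
    have h1 : ∑ v ∈ S', (G.degree v : ℝ) ≤ S'.card • (2 / 5 * (n : ℝ)) := by
      apply Finset.sum_le_card_nsmul
      intro v hv
      have := hS'sub hv
      rw [Finset.mem_filter] at this
      exact this.2
    rw [hS'card', nsmul_eq_mul] at h1
    push_cast at h1
    linarith
  have hdelR : (G.edgeFinset.card : ℝ) ≤
      ((G.comap (Function.Embedding.subtype (fun v => v ∉ S'))).edgeFinset.card : ℝ)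
        + ∑ v ∈ S', (G.degree v : ℝ) := by
    exact_mod_cast hdel
  have hnR : (2000 : ℝ) ≤ (n : ℝ) := by exact_mod_cast hN
  nlinarith [hE, hmantel, hdelR, hdegsum, hnR]
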